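/- arXiv:2007.14434 — 5 statements merged into one kernel-verified Lean document; each statement's English description precedes it below -/
import Mathlib

section
/- The rate function of a sum of i.i.d. geometric variables: for f̄ > 0, 0 < ϱ < 1, and 0 < x < f̄·ϱ/(1-ϱ), sup_{θ ≥ 0} { -θx - f̄·log((1-ϱ)/(1-ϱ e^{-θ})) } = x·log(x/(ϱ(f̄+x))) + f̄·log(f̄/((1-ϱ)(f̄+x))). -/
open Real

lemma key_log_ineq (f x u : ℝ) (hf : 0 < f) (hx : 0 < x) (hu : 0 < u) (hu1 : u < 1) :
    x * Real.log u + f * Real.log (1 - u) ≤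
      x * Real.log (x / (f + x)) + f * Real.log (f / (f + x)) := by
  have hfx : 0 < f + x := by linarith
  have h1u : 0 < 1 - u := by linarith
  have ha : Real.log (u / (x / (f + x))) ≤ u / (x / (f + x)) - 1 :=
    Real.log_le_sub_one_of_pos (by positivity)
  have hb : Real.log ((1 - u) / (f / (f + x))) ≤ (1 - u) / (f / (f + x)) - 1 :=
    Real.log_le_sub_one_of_pos (by positivity)
  rw [Real.log_div hu.ne' (by positivity)] at ha
  rw [Real.log_div h1u.ne' (by positivity)] at hb
  have hsum : x * (u / (x / (f + x)) - 1) + f * ((1 - u) / (f / (f + x)) - 1) = 0 := by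
    field_simp
    ring
  nlinarith [mul_le_mul_of_nonneg_left ha hx.le, mul_le_mul_of_nonneg_left hb hf.le]

/-- The rate function of a sum of i.i.d. geometric variables: for `f̄ > 0`,
`0 < ϱ < 1` and `0 < x < f̄ ϱ/(1-ϱ)`,
`sup_{θ ≥ 0} { -θx - f̄ log((1-ϱ)/(1-ϱ e^{-θ})) }
  = x log(x/(ϱ(f̄+x))) + f̄ log(f̄/((1-ϱ)(f̄+x)))`. -/
theorem stmt_4 (fbar ϱ x : ℝ) (hf : 0 < fbar) (hϱ : ϱ ∈ Set.Ioo (0 : ℝ) 1)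
    (hx0 : 0 < x) (hx1 : x < fbar * ϱ / (1 - ϱ)) :
    sSup ((fun θ : ℝ =>
        -θ * x - fbar * Real.log ((1 - ϱ) / (1 - ϱ * Real.exp (-θ)))) '' Set.Ici 0) =
      x * Real.log (x / (ϱ * (fbar + x))) +
        fbar * Real.log (fbar / ((1 - ϱ) * (fbar + x))) := by
  obtain ⟨hϱ0, hϱ1⟩ := hϱ
  have h1ϱ : 0 < 1 - ϱ := by linarith
  have hfx : 0 < fbar + x := by linarith
  have hxϱ : x < ϱ * (fbar + x) := by
    nlinarith [(lt_div_iff₀ h1ϱ).mp hx1]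
  set θs : ℝ := Real.log (ϱ * (fbar + x) / x) with hθs
  have hratio : 1 < ϱ * (fbar + x) / x := (one_lt_div hx0).mpr hxϱ
  have hθs0 : 0 ≤ θs := le_of_lt (Real.log_pos hratio)
  have hexp : Real.exp (-θs) = x / (ϱ * (fbar + x)) := by
    rw [Real.exp_neg, hθs, Real.exp_log (by positivity)]
    field_simp
  apply IsGreatest.csSup_eq
  constructor
  · refine ⟨θs, hθs0, ?_⟩
    show -θs * x - fbar * Real.log ((1 - ϱ) / (1 - ϱ * Real.exp (-θs))) = _
    have h1 : 1 - ϱ * Real.exp (-θs) = fbar / (fbar + x) := by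
      rw [hexp]; field_simp; ring
    have h2 : (1 - ϱ) / (fbar / (fbar + x)) = (fbar / ((1 - ϱ) * (fbar + x)))⁻¹ := by
      field_simp
    have h3 : θs = -Real.log (x / (ϱ * (fbar + x))) := by
      rw [hθs, ← Real.log_inv]
      congr 1
      field_simp
    rw [h1, h2, Real.log_inv, h3]
    ring
  · rintro y ⟨θ, hθ, rfl⟩
    simp only [Set.mem_Ici] at hθ
    show -θ * x - fbar * Real.log ((1 - ϱ) / (1 - ϱ * Real.exp (-θ))) ≤ _
    set u : ℝ := ϱ * Real.exp (-θ) with hu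
    have hu0 : 0 < u := by positivity
    have hu1 : u < 1 := by
      have : Real.exp (-θ) ≤ 1 := Real.exp_le_one_iff.mpr (by linarith)
      nlinarith
    have hlogu : Real.log u = Real.log ϱ - θ := by
      rw [hu, Real.log_mul hϱ0.ne' (Real.exp_pos _).ne', Real.log_exp]; ring
    have hlog1 : Real.log ((1 - ϱ) / (1 - u)) = Real.log (1 - ϱ) - Real.log (1 - u) :=
      Real.log_div h1ϱ.ne' (by linarith)
    have key := key_log_ineq fbar x u hf hx0 hu0 hu1
    have e1 : Real.log (x / (ϱ * (fbar + x))) = Real.log (x / (fbar + x)) - Real.log ϱ := by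
      rw [← Real.log_div (by positivity) hϱ0.ne']
      congr 1
      field_simp
    have e2 : Real.log (fbar / ((1 - ϱ) * (fbar + x)))
        = Real.log (fbar / (fbar + x)) - Real.log (1 - ϱ) := by
      rw [← Real.log_div (by positivity) h1ϱ.ne']
      congr 1
      field_simp
    have hθeq : -θ = Real.log u - Real.log ϱ := by rw [hlogu]; ring
    rw [hlog1, e1, e2, hθeq]
    nlinarith [key]
end

section
/- Ratio-of-falling-factorials limit: let (n)_k = n(n-1)⋯(n-k+1). If k(m), i(m) are sequences of natural numbers with k(m) = o(n(m)), i(m) = o(n(m)), and k(m)·i(m)/n(m) → x as n(m) → ∞, then (n(m)+k(m)+i(m))_{k(m)} / (n(m)+k(m))_{k(m)} → e^x. -/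
open Filter Finset

lemma aux_pow_tendsto_exp (k : ℕ → ℕ) (c : ℕ → ℝ) (x : ℝ)
    (hc0 : ∀ m, 0 ≤ c m) (hc : Tendsto c atTop (nhds 0))
    (h : Tendsto (fun m => (k m : ℝ) * c m) atTop (nhds x)) :
    Tendsto (fun m => (1 + c m) ^ k m) atTop (nhds (Real.exp x)) := by
  have hpos : ∀ m, (0:ℝ) < 1 + c m := fun m => by linarith [hc0 m]
  have hlog : Tendsto (fun m => (k m : ℝ) * Real.log (1 + c m)) atTop (nhds x) := by
    have hinv : Tendsto (fun m => (1 + c m)⁻¹) atTop (nhds 1) := by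
      have := ((tendsto_const_nhds (α := ℕ) (f := atTop) (x := (1:ℝ))).add hc).inv₀ (by norm_num)
      simpa using this
    have hlow : Tendsto (fun m => ((k m : ℝ) * c m) * (1 + c m)⁻¹) atTop (nhds x) := by
      simpa using h.mul hinv
    refine tendsto_of_tendsto_of_tendsto_of_le_of_le hlow h ?_ ?_
    · intro m
      have h1 : c m * (1 + c m)⁻¹ ≤ Real.log (1 + c m) := by
        have h2 := Real.one_sub_inv_le_log_of_pos (hpos m)
        have ht : (1 + c m) * (1 + c m)⁻¹ = 1 := mul_inv_cancel₀ (hpos m).ne'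
        have h3 : 1 - (1 + c m)⁻¹ = c m * (1 + c m)⁻¹ := by linear_combination -ht
        linarith [h2, h3.le]
      calc (k m : ℝ) * c m * (1 + c m)⁻¹ = (k m : ℝ) * (c m * (1 + c m)⁻¹) := by ring
        _ ≤ (k m : ℝ) * Real.log (1 + c m) :=
          mul_le_mul_of_nonneg_left h1 (Nat.cast_nonneg _)
    · intro m
      have h1 : Real.log (1 + c m) ≤ c m := by
        have := Real.log_le_sub_one_of_pos (hpos m)
        linarith
      exact mul_le_mul_of_nonneg_left h1 (Nat.cast_nonneg _)
  have := (Real.continuous_exp.tendsto x).comp hlog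
  refine this.congr fun m => ?_
  show Real.exp ((k m : ℝ) * Real.log (1 + c m)) = (1 + c m) ^ k m
  rw [← Real.log_pow, Real.exp_log (pow_pos (hpos m) _)]

lemma ratio_bounds (n k i : ℕ) (hm : 1 ≤ n) :
    (1 + (i : ℝ) / ((n : ℝ) + k)) ^ k ≤
        (Nat.descFactorial (n + k + i) k : ℝ) / (Nat.descFactorial (n + k) k : ℝ) ∧
      (Nat.descFactorial (n + k + i) k : ℝ) / (Nat.descFactorial (n + k) k : ℝ) ≤
        (1 + (i : ℝ) / ((n : ℝ) + 1)) ^ k := by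
  have key : (Nat.descFactorial (n + k + i) k : ℝ) / (Nat.descFactorial (n + k) k : ℝ) =
      ∏ j ∈ range k, (((n + k + i - j : ℕ) : ℝ) / ((n + k - j : ℕ) : ℝ)) := by
    rw [Nat.descFactorial_eq_prod_range, Nat.descFactorial_eq_prod_range, Nat.cast_prod,
      Nat.cast_prod, ← Finset.prod_div_distrib]
  have hfac : ∀ j ∈ range k,
      ((n + k + i - j : ℕ) : ℝ) / ((n + k - j : ℕ) : ℝ) = 1 + (i : ℝ) / ((n + k - j : ℕ) : ℝ) := by
    intro j hj
    have hj' : j < k := mem_range.mp hj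
    have h1 : n + k + i - j = (n + k - j) + i := by omega
    have hd : (0:ℝ) < ((n + k - j : ℕ) : ℝ) := by exact_mod_cast (by omega : 0 < n + k - j)
    rw [h1, Nat.cast_add, add_div, div_self hd.ne', add_comm 1]
  have hdle : ∀ j ∈ range k, ((n + k - j : ℕ) : ℝ) ≤ (n : ℝ) + k := by
    intro j _
    have h := Nat.cast_le (α := ℝ).mpr (Nat.sub_le (n + k) j)
    push_cast at h
    exact h
  have hdge : ∀ j ∈ range k, (n : ℝ) + 1 ≤ ((n + k - j : ℕ) : ℝ) := by
    intro j hj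
    have hj' : j < k := mem_range.mp hj
    have h := Nat.cast_le (α := ℝ).mpr (by omega : n + 1 ≤ n + k - j)
    push_cast at h
    exact h
  have hdpos : ∀ j ∈ range k, (0:ℝ) < ((n + k - j : ℕ) : ℝ) := by
    intro j hj
    have := hdge j hj
    have hn0 : (0:ℝ) ≤ (n : ℝ) := Nat.cast_nonneg n
    linarith
  constructor
  · rw [key]
    calc (1 + (i : ℝ) / ((n : ℝ) + k)) ^ k
        = ∏ _j ∈ range k, (1 + (i : ℝ) / ((n : ℝ) + k)) := by
          rw [Finset.prod_const, card_range]
      _ ≤ ∏ j ∈ range k, (((n + k + i - j : ℕ) : ℝ) / ((n + k - j : ℕ) : ℝ)) := by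
          refine Finset.prod_le_prod (fun j _ => by positivity) (fun j hj => ?_)
          rw [hfac j hj]
          have h1 : (i : ℝ) / ((n : ℝ) + k) ≤ (i : ℝ) / ((n + k - j : ℕ) : ℝ) := by
            apply div_le_div_of_nonneg_left (Nat.cast_nonneg i) (hdpos j hj) (hdle j hj)
          linarith
  · rw [key]
    calc (∏ j ∈ range k, (((n + k + i - j : ℕ) : ℝ) / ((n + k - j : ℕ) : ℝ)))
        ≤ ∏ _j ∈ range k, (1 + (i : ℝ) / ((n : ℝ) + 1)) := by
          refine Finset.prod_le_prod (fun j _ => by positivity) (fun j hj => ?_)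
          rw [hfac j hj]
          have h1 : (i : ℝ) / ((n + k - j : ℕ) : ℝ) ≤ (i : ℝ) / ((n : ℝ) + 1) := by
            apply div_le_div_of_nonneg_left (Nat.cast_nonneg i) (by positivity) (hdge j hj)
          linarith
      _ = (1 + (i : ℝ) / ((n : ℝ) + 1)) ^ k := by rw [Finset.prod_const, card_range]

/-- Ratio-of-falling-factorials limit: if `n(m) → ∞`, `k(m)/n(m) → 0`,
`i(m)/n(m) → 0` and `k(m) i(m)/n(m) → x ≥ 0`, then
`(n+k+i)_k / (n+k)_k → e^x`, where `(n)_k` is the falling factorial. -/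
theorem stmt_8 (n k i : ℕ → ℕ) (x : ℝ) (hx : 0 ≤ x)
    (hn : Tendsto n atTop atTop)
    (hk : Tendsto (fun m => (k m : ℝ) / n m) atTop (nhds 0))
    (hi : Tendsto (fun m => (i m : ℝ) / n m) atTop (nhds 0))
    (hki : Tendsto (fun m => (k m : ℝ) * i m / n m) atTop (nhds x)) :
    Tendsto (fun m =>
        ((Nat.descFactorial (n m + k m + i m) (k m) : ℝ)) /
          (Nat.descFactorial (n m + k m) (k m) : ℝ))
      atTop (nhds (Real.exp x)) := by
  have hn1 : ∀ᶠ m in atTop, 1 ≤ n m := hn.eventually_ge_atTop 1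
  have hnR : Tendsto (fun m => (n m : ℝ)) atTop atTop :=
    tendsto_natCast_atTop_atTop.comp hn
  -- n/(n+k) → 1
  have hA : Tendsto (fun m => (n m : ℝ) / (n m + k m)) atTop (nhds 1) := by
    have h1 : Tendsto (fun m => (1 + (k m : ℝ) / n m)⁻¹) atTop (nhds 1) := by
      have := ((tendsto_const_nhds (α := ℕ) (f := atTop) (x := (1:ℝ))).add hk).inv₀ (by norm_num)
      simpa using this
    refine h1.congr' ?_
    filter_upwards [hn1] with m hm
    have hnm : (0:ℝ) < n m := by exact_mod_cast Nat.lt_of_lt_of_le Nat.zero_lt_one hm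
    have hnk : (0:ℝ) < (n m : ℝ) + k m := by positivity
    field_simp
  -- n/(n+1) → 1
  have hB : Tendsto (fun m => (n m : ℝ) / (n m + 1)) atTop (nhds 1) := by
    have h0 : Tendsto (fun m => ((n m : ℝ))⁻¹) atTop (nhds 0) := hnR.inv_tendsto_atTop
    have h1 : Tendsto (fun m => (1 + ((n m : ℝ))⁻¹)⁻¹) atTop (nhds 1) := by
      have := ((tendsto_const_nhds (α := ℕ) (f := atTop) (x := (1:ℝ))).add h0).inv₀ (by norm_num)
      simpa using this
    refine h1.congr' ?_
    filter_upwards [hn1] with m hm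
    have hnm : (0:ℝ) < n m := by exact_mod_cast Nat.lt_of_lt_of_le Nat.zero_lt_one hm
    have hn1' : (0:ℝ) < (n m : ℝ) + 1 := by positivity
    field_simp
  set c : ℕ → ℝ := fun m => (i m : ℝ) / ((n m : ℝ) + k m) with hc_def
  set b : ℕ → ℝ := fun m => (i m : ℝ) / ((n m : ℝ) + 1) with hb_def
  have hc0 : ∀ m, 0 ≤ c m := fun m => by positivity
  have hb0 : ∀ m, 0 ≤ b m := fun m => by positivity
  have hcc : Tendsto c atTop (nhds 0) := by
    have h2 := hi.mul hA
    rw [zero_mul] at h2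
    refine h2.congr' ?_
    filter_upwards [hn1] with m hm
    have hnm : ((n m : ℝ)) ≠ 0 := by
      have : (0:ℝ) < n m := by exact_mod_cast Nat.lt_of_lt_of_le Nat.zero_lt_one hm
      exact this.ne'
    have hnk : ((n m : ℝ) + k m) ≠ 0 := by positivity
    simp only [hc_def]
    field_simp
  have hkc : Tendsto (fun m => (k m : ℝ) * c m) atTop (nhds x) := by
    have := hki.mul hA
    rw [mul_one] at this
    refine this.congr' ?_
    filter_upwards [hn1] with m hm
    have hnm : ((n m : ℝ)) ≠ 0 := by
      have : (0:ℝ) < n m := by exact_mod_cast Nat.lt_of_lt_of_le Nat.zero_lt_one hm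
      exact this.ne'
    have hnk : ((n m : ℝ) + k m) ≠ 0 := by positivity
    simp only [hc_def]
    field_simp
  have hkb : Tendsto (fun m => (k m : ℝ) * b m) atTop (nhds x) := by
    have := hki.mul hB
    rw [mul_one] at this
    refine this.congr' ?_
    filter_upwards [hn1] with m hm
    have hnm : ((n m : ℝ)) ≠ 0 := by
      have : (0:ℝ) < n m := by exact_mod_cast Nat.lt_of_lt_of_le Nat.zero_lt_one hm
      exact this.ne'
    have hn1' : ((n m : ℝ) + 1) ≠ 0 := by positivity
    simp only [hb_def]
    field_simp
  have hbb : Tendsto b atTop (nhds 0) := by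
    have h2 := hi.mul hB
    rw [zero_mul] at h2
    refine h2.congr' ?_
    filter_upwards [hn1] with m hm
    have hnm : ((n m : ℝ)) ≠ 0 := by
      have : (0:ℝ) < n m := by exact_mod_cast Nat.lt_of_lt_of_le Nat.zero_lt_one hm
      exact this.ne'
    simp only [hb_def]
    field_simp
  have hL := aux_pow_tendsto_exp k c x hc0 hcc hkc
  have hU := aux_pow_tendsto_exp k b x hb0 hbb hkb
  refine tendsto_of_tendsto_of_tendsto_of_le_of_le' hL hU ?_ ?_
  · filter_upwards [hn1] with m hm
    exact (ratio_bounds (n m) (k m) (i m) hm).1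
  · filter_upwards [hn1] with m hm
    exact (ratio_bounds (n m) (k m) (i m) hm).2
end

section
/- Existence and uniqueness of the variational fixed point: let g(x) = (n̄+k̄-x)log(n̄+k̄-x) - (n̄-x)log(n̄-x) on [0, n̄] with n̄, k̄ > 0, and let ℓ : [0,∞) → [0,∞) be a convex, continuously differentiable function on (0, c), strictly decreasing on [0, c], zero on [c, ∞) (c > 0), with ℓ'(x) → -∞ as x ↓ 0 and ℓ'(x) → 0 as x ↑ c. Then sup_{x ∈ [0, n̄]} { g(x) - ℓ(x) } is attained at a unique ψ ∈ (0, min(n̄, c)), and ψ satisfies the first-order condition log((n̄-ψ)/(n̄+k̄-ψ)) = ℓ'(ψ). -/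
open Real Set Filter

private lemma aux_hasDerivAt_mul_log (a x : ℝ) (h : x < a) :
    HasDerivAt (fun y : ℝ => (a - y) * Real.log (a - y)) (-Real.log (a - x) - 1) x := by
  have hpos : (0:ℝ) < a - x := by linarith
  have h1 : HasDerivAt (fun y : ℝ => a - y) (-1 : ℝ) x := by
    simpa using (hasDerivAt_id x).const_sub a
  have h2 : HasDerivAt (fun y : ℝ => Real.log (a - y)) ((a - x)⁻¹ * (-1)) x :=
    (Real.hasDerivAt_log hpos.ne').comp x h1
  have h3 := h1.mul h2
  refine h3.congr_deriv ?_
  rw [mul_inv_cancel_left₀ hpos.ne']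
  ring

/-- Existence and uniqueness of the variational fixed point: with
`g(x) = (n̄+k̄-x)log(n̄+k̄-x) - (n̄-x)log(n̄-x)` on `[0,n̄]` (`n̄, k̄ > 0`) and
`ℓ` convex, continuously differentiable on `(0,c)`, strictly decreasing on
`[0,c]`, zero on `[c,∞)`, nonnegative, with `ℓ' → -∞` at `0⁺` and `ℓ' → 0` at
`c⁻`, the supremum of `g - ℓ` over `[0,n̄]` is attained at a unique
`ψ ∈ (0, min n̄ c)` satisfying `log((n̄-ψ)/(n̄+k̄-ψ)) = ℓ'(ψ)`. -/
theorem stmt_15 (nbar kbar c : ℝ) (hn : 0 < nbar) (hk : 0 < kbar) (hc : 0 < c)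
    (g : ℝ → ℝ)
    (hg : ∀ x, g x =
      (nbar + kbar - x) * Real.log (nbar + kbar - x) - (nbar - x) * Real.log (nbar - x))
    (ℓ ℓ' : ℝ → ℝ)
    (hconv : ConvexOn ℝ (Ici 0) ℓ)
    (hderiv : ∀ x ∈ Ioo 0 c, HasDerivAt ℓ (ℓ' x) x)
    (hderivcont : ContinuousOn ℓ' (Ioo 0 c))
    (hanti : StrictAntiOn ℓ (Icc 0 c))
    (hzero : ∀ x, c ≤ x → ℓ x = 0)
    (hnonneg : ∀ x, 0 ≤ x → 0 ≤ ℓ x)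
    (hbot : Tendsto ℓ' (nhdsWithin 0 (Ioi 0)) atBot)
    (htop : Tendsto ℓ' (nhdsWithin c (Iio c)) (nhds 0)) :
    ∃ ψ ∈ Ioo 0 (min nbar c),
      IsMaxOn (fun x => g x - ℓ x) (Icc 0 nbar) ψ ∧
      (∀ φ ∈ Icc 0 nbar, IsMaxOn (fun x => g x - ℓ x) (Icc 0 nbar) φ → φ = ψ) ∧
      Real.log ((nbar - ψ) / (nbar + kbar - ψ)) = ℓ' ψ := by
  set m := min nbar c with hm
  have hm0 : 0 < m := lt_min hn hc
  have hmn : m ≤ nbar := min_le_left _ _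
  have hmc : m ≤ c := min_le_right _ _
  set F : ℝ → ℝ := fun x => g x - ℓ x with hF
  set gp : ℝ → ℝ := fun x => Real.log (nbar - x) - Real.log (nbar + kbar - x) with hgp
  set Fp : ℝ → ℝ := fun x => gp x - ℓ' x with hFp
  clear_value m F gp Fp
  have hgfun : g = fun x => (nbar + kbar - x) * Real.log (nbar + kbar - x)
      - (nbar - x) * Real.log (nbar - x) := funext hg
  -- derivative of g
  have hgd : ∀ x ∈ Iio nbar, HasDerivAt g (gp x) x := by
    intro x hx
    rw [mem_Iio] at hx
    have h1 := aux_hasDerivAt_mul_log (nbar + kbar) x (by linarith)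
    have h2 := aux_hasDerivAt_mul_log nbar x hx
    have h3 := h1.sub h2
    rw [hgfun]
    refine h3.congr_deriv ?_
    simp only [hgp]
    ring
  -- g continuous
  have hgc : Continuous g := by
    rw [hgfun]
    exact (Real.continuous_mul_log.comp (continuous_const.sub continuous_id)).sub
      (Real.continuous_mul_log.comp (continuous_const.sub continuous_id))
  -- gp strictly antitone
  have hgpanti : ∀ x ∈ Iio nbar, ∀ y ∈ Iio nbar, x < y → gp y < gp x := by
    intro x hx y hy hxy
    rw [mem_Iio] at hx hy
    have hq : 0 < nbar - y := by linarith
    have hp : 0 < nbar - x := by linarith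
    have key : (nbar - y) * (nbar + kbar - x) < (nbar - x) * (nbar + kbar - y) := by nlinarith
    have hlog := Real.log_lt_log (mul_pos hq (by linarith)) key
    rw [Real.log_mul hq.ne' (show (nbar + kbar - x) ≠ 0 from (show (0:ℝ) < nbar + kbar - x by linarith).ne'),
      Real.log_mul hp.ne' (show (nbar + kbar - y) ≠ 0 from (show (0:ℝ) < nbar + kbar - y by linarith).ne')] at hlog
    simp only [hgp]
    linarith
  -- gp negative
  have hgpneg : ∀ x ∈ Iio nbar, gp x < 0 := by
    intro x hx
    rw [mem_Iio] at hx
    have : Real.log (nbar - x) < Real.log (nbar + kbar - x) :=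
      Real.log_lt_log (by linarith) (by linarith)
    simp only [hgp]
    linarith
  -- gp continuous on Iio nbar
  have hgpc : ContinuousOn gp (Iio nbar) := by
    intro t ht
    rw [mem_Iio] at ht
    apply ContinuousAt.continuousWithinAt
    rw [hgp]
    have h1 : ContinuousAt (fun x : ℝ => Real.log (nbar - x)) t :=
      ContinuousAt.comp (Real.continuousAt_log (by intro h; linarith))
        ((continuous_const.sub continuous_id).continuousAt)
    have h2 : ContinuousAt (fun x : ℝ => Real.log (nbar + kbar - x)) t :=
      ContinuousAt.comp (Real.continuousAt_log (by intro h; linarith))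
        ((continuous_const.sub continuous_id).continuousAt)
    exact h1.sub h2
  -- ℓ continuous on Ioi 0
  have hlc : ContinuousOn ℓ (Ioi 0) :=
    ConvexOn.continuousOn isOpen_Ioi (hconv.subset Ioi_subset_Ici_self (convex_Ioi 0))
  -- ℓ' monotone on Ioo 0 c
  have hlpmono : ∀ x ∈ Ioo 0 c, ∀ y ∈ Ioo 0 c, x < y → ℓ' x ≤ ℓ' y := by
    intro x hx y hy hxy
    have h1 := hconv.le_slope_of_hasDerivAt (mem_Ici.2 hx.1.le) (mem_Ici.2 hy.1.le) hxy
      (hderiv x hx)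
    have h2 := hconv.slope_le_of_hasDerivAt (mem_Ici.2 hx.1.le) (mem_Ici.2 hy.1.le) hxy
      (hderiv y hy)
    exact h1.trans h2
  -- derivative of F
  have hFd : ∀ t ∈ Ioo 0 m, HasDerivAt F (Fp t) t := by
    intro t ht
    rw [hF]
    have : Fp t = gp t - ℓ' t := by rw [hFp]
    rw [this]
    exact (hgd t (mem_Iio.2 (lt_of_lt_of_le ht.2 hmn))).sub
      (hderiv t ⟨ht.1, lt_of_lt_of_le ht.2 hmc⟩)
  -- Fp strictly antitone on Ioo 0 m
  have hFpanti : ∀ x ∈ Ioo 0 m, ∀ y ∈ Ioo 0 m, x < y → Fp y < Fp x := by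
    intro x hx y hy hxy
    have h1 : gp y < gp x := hgpanti x (mem_Iio.2 (lt_of_lt_of_le hx.2 hmn))
      y (mem_Iio.2 (lt_of_lt_of_le hy.2 hmn)) hxy
    have h2 : ℓ' x ≤ ℓ' y := hlpmono x ⟨hx.1, lt_of_lt_of_le hx.2 hmc⟩
      y ⟨hy.1, lt_of_lt_of_le hy.2 hmc⟩ hxy
    simp only [hFp]
    linarith
  -- F continuous on subsets of Ioi 0
  have hFc : ∀ s : Set ℝ, s ⊆ Ioi 0 → ContinuousOn F s := by
    intro s hs
    rw [hF]
    exact (hgc.continuousOn).sub (hlc.mono hs)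
  -- point a with Fp a > 0
  obtain ⟨a, halt, ha⟩ : ∃ a, ℓ' a < gp (m / 2) ∧ a ∈ Ioo 0 (m / 2) := by
    have h1 : ∀ᶠ x in nhdsWithin 0 (Ioi 0), ℓ' x < gp (m / 2) :=
      hbot.eventually_lt_atBot _
    have h2 : Ioo (0:ℝ) (m / 2) ∈ nhdsWithin 0 (Ioi 0) :=
      Ioo_mem_nhdsGT_of_mem ⟨le_rfl, by linarith⟩
    exact (h1.and (eventually_of_mem h2 fun x hx => hx)).exists
  have ham : a < m := lt_trans ha.2 (by linarith)
  have haFp : 0 < Fp a := by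
    have h1 : gp (m / 2) < gp a := hgpanti a (mem_Iio.2 (by linarith))
      (m / 2) (mem_Iio.2 (by linarith)) ha.2
    simp only [hFp]
    linarith [halt, h1]
  -- point b with Fp b < 0
  obtain ⟨b, hbmem, hbFp⟩ : ∃ b, b ∈ Ioo a m ∧ Fp b < 0 := by
    rcases le_or_gt nbar c with hcase | hcase
    · -- m = nbar, gp → -∞ at nbar⁻
      have hmeq : m = nbar := hm.trans (min_eq_left hcase)
      have h1 : Tendsto (fun x => nbar - x) (nhdsWithin nbar (Iio nbar)) (nhdsWithin 0 (Ioi 0)) := by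
        apply tendsto_nhdsWithin_of_tendsto_nhds_of_eventually_within
        · have hcont : Continuous (fun x : ℝ => nbar - x) := continuous_const.sub continuous_id
          have := hcont.tendsto nbar
          simp only [sub_self] at this
          exact this.mono_left nhdsWithin_le_nhds
        · exact eventually_nhdsWithin_of_forall fun x hx => mem_Ioi.2 (sub_pos.2 (mem_Iio.1 hx))
      have h2 : Tendsto (fun x => Real.log (nbar - x)) (nhdsWithin nbar (Iio nbar)) atBot :=
        Real.tendsto_log_nhdsGT_zero.comp h1
      have h3 : Tendsto (fun x => Real.log (nbar + kbar - x)) (nhdsWithin nbar (Iio nbar))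
          (nhds (Real.log kbar)) := by
        have hct : ContinuousAt (fun x : ℝ => Real.log (nbar + kbar - x)) nbar :=
          ContinuousAt.comp (Real.continuousAt_log (by intro h; linarith))
            ((continuous_const.sub continuous_id).continuousAt)
        have hT : Tendsto (fun x : ℝ => Real.log (nbar + kbar - x)) (nhdsWithin nbar (Iio nbar))
            (nhds (Real.log (nbar + kbar - nbar))) :=
          hct.tendsto.mono_left nhdsWithin_le_nhds
        simpa using hT
      have h4 : Tendsto gp (nhdsWithin nbar (Iio nbar)) atBot := by
        have hbd : ∀ᶠ x in nhdsWithin nbar (Iio nbar),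
            -Real.log (nbar + kbar - x) ≤ -Real.log kbar + 1 :=
          (h3.neg.eventually (eventually_lt_nhds (by linarith))).mono
            fun x hx => hx.le
        have h5 := tendsto_atBot_add_right_of_ge' _ (-Real.log kbar + 1) h2 hbd
        have heq : gp = fun x => Real.log (nbar - x) + -Real.log (nbar + kbar - x) := by
          rw [hgp]; funext x; ring
        rw [heq]; exact h5
      have h5 := h4.eventually_lt_atBot (ℓ' a)
      have h6 : Ioo a nbar ∈ nhdsWithin nbar (Iio nbar) :=
        Ioo_mem_nhdsLT_of_mem ⟨by rw [hmeq] at ham; exact ham, le_rfl⟩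
      obtain ⟨b, hb1, hb2⟩ := (h5.and (eventually_of_mem h6 fun x hx => hx)).exists
      refine ⟨b, ⟨hb2.1, by rw [hmeq]; exact hb2.2⟩, ?_⟩
      have hbc : b ∈ Ioo 0 c := ⟨lt_trans ha.1 hb2.1, lt_of_lt_of_le hb2.2 hcase⟩
      have hac : a ∈ Ioo 0 c := ⟨ha.1, by rw [hmeq] at ham; linarith [ham, hcase]⟩
      have := hlpmono a hac b hbc hb2.1
      simp only [hFp]
      linarith
    · -- m = c, Fp → gp c < 0 at c⁻
      have hmeq : m = c := hm.trans (min_eq_right hcase.le)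
      have hgpct : ContinuousAt gp c := by
        rw [hgp]
        have h1 : ContinuousAt (fun x : ℝ => Real.log (nbar - x)) c :=
          ContinuousAt.comp (Real.continuousAt_log (by intro h; linarith))
            ((continuous_const.sub continuous_id).continuousAt)
        have h2 : ContinuousAt (fun x : ℝ => Real.log (nbar + kbar - x)) c :=
          ContinuousAt.comp (Real.continuousAt_log (by intro h; linarith))
            ((continuous_const.sub continuous_id).continuousAt)
        exact h1.sub h2
      have h1 : Tendsto Fp (nhdsWithin c (Iio c)) (nhds (gp c - 0)) := by
        rw [hFp]
        exact ((hgpct.tendsto).mono_left nhdsWithin_le_nhds).sub htop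
      have h2 : gp c - 0 < 0 := by
        have := hgpneg c (mem_Iio.2 hcase)
        linarith
      have h3 : ∀ᶠ x in nhdsWithin c (Iio c), Fp x < 0 := h1.eventually (eventually_lt_nhds h2)
      have h4 : Ioo a c ∈ nhdsWithin c (Iio c) :=
        Ioo_mem_nhdsLT_of_mem ⟨by rw [hmeq] at ham; exact ham, le_rfl⟩
      obtain ⟨b, hb1, hb2⟩ := (h3.and (eventually_of_mem h4 fun x hx => hx)).exists
      exact ⟨b, ⟨hb2.1, by rw [hmeq]; exact hb2.2⟩, hb1⟩
  have hab : a < b := hbmem.1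
  have hbm : b < m := hbmem.2
  -- Fp continuous on [a,b]
  have habsub1 : Icc a b ⊆ Iio nbar := fun x hx =>
    mem_Iio.2 (lt_of_le_of_lt hx.2 (lt_of_lt_of_le hbm hmn))
  have habsub2 : Icc a b ⊆ Ioo 0 c := fun x hx =>
    ⟨lt_of_lt_of_le ha.1 hx.1, lt_of_le_of_lt hx.2 (lt_of_lt_of_le hbm hmc)⟩
  have hFpc : ContinuousOn Fp (Icc a b) := by
    rw [hFp]
    exact (hgpc.mono habsub1).sub (hderivcont.mono habsub2)
  -- IVT
  obtain ⟨ψ, hψab, hψ0⟩ : ∃ ψ ∈ Icc a b, Fp ψ = 0 := by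
    have := intermediate_value_Icc' hab.le hFpc
    have h0 : (0:ℝ) ∈ Icc (Fp b) (Fp a) := ⟨hbFp.le, haFp.le⟩
    obtain ⟨ψ, hψ, hψeq⟩ := this h0
    exact ⟨ψ, hψ, hψeq⟩
  have haψ : a < ψ := by
    rcases lt_or_eq_of_le hψab.1 with h | h
    · exact h
    · exfalso; rw [← h] at hψ0; linarith
  have hψb : ψ < b := by
    rcases lt_or_eq_of_le hψab.2 with h | h
    · exact h
    · exfalso; rw [h] at hψ0; linarith
  have hψIoo : ψ ∈ Ioo 0 m := ⟨lt_trans ha.1 haψ, lt_trans hψb hbm⟩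
  -- sign of Fp around ψ
  have hFppos : ∀ t ∈ Ioo 0 m, t < ψ → 0 < Fp t := by
    intro t ht h
    have := hFpanti t ht ψ hψIoo h
    rw [hψ0] at this
    exact this
  have hFpneg : ∀ t ∈ Ioo 0 m, ψ < t → Fp t < 0 := by
    intro t ht h
    have := hFpanti ψ hψIoo t ht h
    rw [hψ0] at this
    exact this
  -- Claim A : F x < F ψ for x ∈ (0, ψ)
  have hA : ∀ x ∈ Ioo 0 ψ, F x < F ψ := by
    intro x hx
    have hsub : Icc x ψ ⊆ Ioi 0 := fun t ht => mem_Ioi.2 (lt_of_lt_of_le hx.1 ht.1)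
    have hmono : StrictMonoOn F (Icc x ψ) := by
      apply strictMonoOn_of_deriv_pos (convex_Icc _ _) (hFc _ hsub)
      intro t ht
      rw [interior_Icc] at ht
      have htm : t ∈ Ioo 0 m := ⟨lt_trans hx.1 ht.1, lt_trans ht.2 hψIoo.2⟩
      rw [(hFd t htm).deriv]
      exact hFppos t htm ht.2
    exact hmono ⟨le_rfl, hx.2.le⟩ ⟨hx.2.le, le_rfl⟩ hx.2
  -- Claim B : F y < F ψ for y ∈ (ψ, m]
  have hB : ∀ y ∈ Ioc ψ m, F y < F ψ := by
    intro y hy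
    have hsub : Icc ψ y ⊆ Ioi 0 := fun t ht => mem_Ioi.2 (lt_of_lt_of_le hψIoo.1 ht.1)
    have hmono : StrictAntiOn F (Icc ψ y) := by
      apply strictAntiOn_of_deriv_neg (convex_Icc _ _) (hFc _ hsub)
      intro t ht
      rw [interior_Icc] at ht
      have htm : t ∈ Ioo 0 m := ⟨lt_trans hψIoo.1 ht.1, lt_of_lt_of_le ht.2 hy.2⟩
      rw [(hFd t htm).deriv]
      exact hFpneg t htm ht.1
    exact hmono ⟨le_rfl, hy.1.le⟩ ⟨hy.1.le, le_rfl⟩ hy.1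
  -- Claim C : F 0 < F ψ
  have hC : F 0 < F ψ := by
    obtain ⟨x, hxlt, hx⟩ : ∃ x, ℓ' x < gp ψ ∧ x ∈ Ioo 0 ψ := by
      have h1 : ∀ᶠ x in nhdsWithin 0 (Ioi 0), ℓ' x < gp ψ := hbot.eventually_lt_atBot _
      have h2 : Ioo (0:ℝ) ψ ∈ nhdsWithin 0 (Ioi 0) :=
        Ioo_mem_nhdsGT_of_mem ⟨le_rfl, hψIoo.1⟩
      exact (h1.and (eventually_of_mem h2 fun t ht => ht)).exists
    have hxc : x ∈ Ioo 0 c := ⟨hx.1, lt_of_lt_of_le (lt_trans hx.2 hψIoo.2) hmc⟩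
    -- slope bound for ℓ
    have hs := hconv.slope_le_of_hasDerivAt (mem_Ici.2 le_rfl) (mem_Ici.2 hx.1.le) hx.1
      (hderiv x hxc)
    rw [slope_def_field] at hs
    have hl0 : ℓ x - ℓ 0 ≤ x * ℓ' x := by
      rw [sub_zero, div_le_iff₀ hx.1] at hs
      linarith
    -- MVT for g
    obtain ⟨ξ, hξ, hξeq⟩ := exists_hasDerivAt_eq_slope g gp hx.1 hgc.continuousOn
      (fun t ht => hgd t (mem_Iio.2 (lt_of_lt_of_le (lt_trans ht.2 (lt_trans hx.2 hψIoo.2)) hmn)))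
    have hgx : g x - g 0 = x * gp ξ := by
      rw [sub_zero] at hξeq
      rw [hξeq]
      field_simp [hx.1.ne']
    have hgpξ : gp ψ < gp ξ := hgpanti ξ (mem_Iio.2 (lt_of_lt_of_le
        (lt_trans (lt_trans hξ.2 hx.2) hψIoo.2) hmn))
      ψ (mem_Iio.2 (lt_of_lt_of_le hψIoo.2 hmn)) (lt_trans hξ.2 hx.2)
    have h1 : F 0 < F x := by
      simp only [hF]
      nlinarith [mul_pos hx.1 (show (0:ℝ) < gp ξ - ℓ' x by linarith)]
    exact lt_trans h1 (hA x hx)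
  -- g strictly antitone on [0, nbar]
  have hganti : StrictAntiOn g (Icc 0 nbar) := by
    apply strictAntiOn_of_deriv_neg (convex_Icc _ _) hgc.continuousOn
    intro t ht
    rw [interior_Icc] at ht
    rw [(hgd t (mem_Iio.2 ht.2)).deriv]
    exact hgpneg t (mem_Iio.2 ht.2)
  -- Claim D : F y < F ψ for y ∈ (m, nbar]
  have hD : ∀ y ∈ Ioc m nbar, F y < F ψ := by
    intro y hy
    have hcm : m = c := by
      rcases le_or_gt nbar c with h | h
      · exfalso
        have : m = nbar := hm.trans (min_eq_left h)
        rw [this] at hy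
        exact absurd hy.2 (not_le.2 hy.1)
      · exact hm.trans (min_eq_right h.le)
    have hcy : c ≤ y := by rw [← hcm]; exact hy.1.le
    have hFy : F y = g y := by simp only [hF]; rw [hzero y hcy]; ring
    have hFm : F m = g m := by
      simp only [hF]; rw [hcm, hzero c le_rfl]; ring
    have hgy : g y < g m :=
      hganti ⟨hm0.le, hmn⟩ ⟨le_trans hm0.le hy.1.le, hy.2⟩ hy.1
    have hBm : F m < F ψ := hB m ⟨hψIoo.2, le_rfl⟩
    rw [hFy]
    rw [hFm] at hBm
    linarith
  -- Master maximality claim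
  have hmax : ∀ x ∈ Icc 0 nbar, x ≠ ψ → F x < F ψ := by
    intro x hx hne
    rcases eq_or_lt_of_le hx.1 with h0 | h0
    · rw [← h0]; exact hC
    rcases lt_trichotomy x ψ with h | h | h
    · exact hA x ⟨h0, h⟩
    · exact absurd h hne
    · rcases le_or_gt x m with h2 | h2
      · exact hB x ⟨h, h2⟩
      · exact hD x ⟨h2, hx.2⟩
  have hψmem : ψ ∈ Icc 0 nbar := ⟨hψIoo.1.le, le_trans hψIoo.2.le hmn⟩
  refine ⟨ψ, hψIoo, ?_, ?_, ?_⟩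
  · rw [isMaxOn_iff]
    intro x hx
    rcases eq_or_ne x ψ with h | h
    · exact le_of_eq (congrArg F h)
    · exact (hmax x hx h).le
  · intro φ hφ hφmax
    by_contra hne
    have h1 := hmax φ hφ hne
    have h2 := (isMaxOn_iff.1 hφmax) ψ hψmem
    simp only [hF] at h1 h2
    linarith
  · have hψn : ψ < nbar := lt_of_lt_of_le hψIoo.2 hmn
    rw [Real.log_div (by intro h; linarith) (by intro h; linarith)]
    simp only [hFp, hgp] at hψ0
    linarith
end

section
/- Normalization-constant representation: with κ₁ < κ₂ ≤ ⋯ ≤ κ_f, f₁ = 1, 𝙼 ~ Poisson(κ₁) and 𝙻_i independent geometric with P[𝙻_i ≥ l] = (κ₁/κ_i)^l for i ≥ 2, 𝚂 = Σ_{i≥2} 𝙻_i, the normalization constant c_{m,f} = m! Σ_{0 ≤ l₁+⋯+l_f ≤ m} κ₁^{-l₁}⋯κ_f^{-l_f}/(m-Σl_i)! satisfies c_{m,f} = P[𝙼 + 𝚂 ≤ m] / (P[𝙼 = m] · P[𝚂 = 0]). -/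
open MeasureTheory ProbabilityTheory

/-- Normalization-constant representation: with `κ₁ < κ₂ ≤ ⋯ ≤ κ_f` (single
bottleneck), `𝙼 ~ Poisson(κ₁)` and `𝙻ᵢ` independent geometrics with ratios
`κ₁/κᵢ` (`i ≥ 2`), the normalization constant
`c_{m,f} = m! Σ_{0 ≤ Σlᵢ ≤ m} κ₁^{-l₁}⋯κ_f^{-l_f}/(m-Σlᵢ)!`
satisfies `c_{m,f} = P[𝙼 + 𝚂 ≤ m] / (P[𝙼 = m] P[𝚂 = 0])`. -/
theorem stmt_17 (m f : ℕ) (hm : 0 < m) (hf : 0 < f)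
    (κ : Fin f → ℝ) (hκpos : ∀ i, 0 < κ i) (hκmono : Monotone κ)
    (hbottleneck : ∀ i, i ≠ ⟨0, hf⟩ → κ ⟨0, hf⟩ < κ i)
    (Ω' : Type*) [MeasurableSpace Ω'] (μ' : Measure Ω') [IsProbabilityMeasure μ']
    (Y : Fin f → Ω' → ℕ) (hYmeas : ∀ i, Measurable (Y i))
    (hindep : iIndepFun Y μ')
    (hY0 : ∀ n : ℕ, μ' {ω | Y ⟨0, hf⟩ ω = n} =
      ENNReal.ofReal (Real.exp (-κ ⟨0, hf⟩) * (κ ⟨0, hf⟩) ^ n / (Nat.factorial n)))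
    (hYi : ∀ i, i ≠ ⟨0, hf⟩ → ∀ n : ℕ, μ' {ω | Y i ω = n} =
      ENNReal.ofReal ((1 - κ ⟨0, hf⟩ / κ i) * (κ ⟨0, hf⟩ / κ i) ^ n)) :
    ENNReal.ofReal ((Nat.factorial m : ℝ) *
        ∑ l ∈ (Fintype.piFinset fun _ : Fin f => Finset.range (m + 1)).filter
            (fun l => ∑ i, l i ≤ m),
          (∏ i, ((κ i)⁻¹) ^ l i) / (Nat.factorial (m - ∑ i, l i))) =
      μ' {ω | ∑ i, Y i ω ≤ m} /
        (μ' {ω | Y ⟨0, hf⟩ ω = m} *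
          μ' {ω | ∑ i ∈ Finset.univ.filter (fun i => i ≠ ⟨0, hf⟩), Y i ω = 0}) := by
  classical
  set i0 : Fin f := ⟨0, hf⟩ with hi0def
  set κ0 : ℝ := κ i0 with hκ0def
  have hκ0 : 0 < κ0 := hκpos i0
  set p : Fin f → ℕ → ℝ := fun i n =>
    if i = i0 then Real.exp (-κ0) * κ0 ^ n / (Nat.factorial n)
    else (1 - κ0 / κ i) * (κ0 / κ i) ^ n with hpdef
  have hr : ∀ i, i ≠ i0 → 0 < 1 - κ0 / κ i := by
    intro i hi
    have h1 : κ0 / κ i < 1 := (div_lt_one (hκpos i)).2 (hbottleneck i hi)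
    linarith
  have hppos : ∀ i n, 0 < p i n := by
    intro i n
    by_cases h : i = i0
    · simp only [hpdef, if_pos h]
      positivity
    · simp only [hpdef, if_neg h]
      exact mul_pos (hr i h) (pow_pos (div_pos hκ0 (hκpos i)) n)
  have hpY : ∀ i n, μ' {ω | Y i ω = n} = ENNReal.ofReal (p i n) := by
    intro i n
    by_cases h : i = i0
    · subst h; simpa only [hpdef, if_pos rfl] using hY0 n
    · simpa only [hpdef, if_neg h] using hYi i h n
  set T := (Fintype.piFinset fun _ : Fin f => Finset.range (m + 1)).filter
      (fun l => ∑ i, l i ≤ m) with hTdef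
  -- numerator
  have hterm : ∀ n : Fin f → ℕ, μ' (⋂ i, Y i ⁻¹' {n i}) = ENNReal.ofReal (∏ i, p i (n i)) := by
    intro n
    rw [hindep.meas_iInter (fun i => ⟨{n i}, measurableSet_singleton _, rfl⟩),
      ENNReal.ofReal_prod_of_nonneg (fun i _ => (hppos i (n i)).le)]
    exact Finset.prod_congr rfl fun i _ => hpY i (n i)
  have hnum : μ' {ω | ∑ i, Y i ω ≤ m} = ENNReal.ofReal (∑ n ∈ T, ∏ i, p i (n i)) := by
    have hset : {ω | ∑ i, Y i ω ≤ m} = ⋃ n ∈ T, ⋂ i, Y i ⁻¹' {n i} := by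
      ext ω
      simp only [Set.mem_setOf_eq, Set.mem_iUnion, Set.mem_iInter, Set.mem_preimage,
        Set.mem_singleton_iff]
      constructor
      · intro h
        refine ⟨fun i => Y i ω, ?_, fun i => rfl⟩
        simp only [hTdef, Finset.mem_filter, Fintype.mem_piFinset, Finset.mem_range]
        exact ⟨fun i => Nat.lt_succ_of_le (le_trans
          (Finset.single_le_sum (f := fun i => Y i ω) (fun j _ => Nat.zero_le _) (Finset.mem_univ i)) h), h⟩
      · rintro ⟨n, hn, hω⟩
        simp only [hTdef, Finset.mem_filter] at hn
        calc ∑ i, Y i ω = ∑ i, n i := Finset.sum_congr rfl fun i _ => hω i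
        _ ≤ m := hn.2
    rw [hset, measure_biUnion_finset ?_ ?_]
    · rw [ENNReal.ofReal_sum_of_nonneg fun n _ =>
        Finset.prod_nonneg fun i _ => (hppos i (n i)).le]
      exact Finset.sum_congr rfl fun n _ => hterm n
    · intro a _ b _ hab
      refine Set.disjoint_left.2 fun ω hωa hωb => hab ?_
      simp only [Set.mem_iInter, Set.mem_preimage, Set.mem_singleton_iff] at hωa hωb
      exact funext fun i => (hωa i).symm.trans (hωb i)
    · exact fun n _ => MeasurableSet.iInter fun i => (hYmeas i) (measurableSet_singleton _)
  -- S = 0 event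
  have hS0 : μ' {ω | ∑ i ∈ Finset.univ.filter (fun i => i ≠ i0), Y i ω = 0}
      = ENNReal.ofReal (∏ i ∈ Finset.univ.erase i0, p i 0) := by
    have hset : {ω | ∑ i ∈ Finset.univ.filter (fun i => i ≠ i0), Y i ω = 0}
        = ⋂ i ∈ Finset.univ.erase i0, Y i ⁻¹' {(0:ℕ)} := by
      ext ω
      simp only [Set.mem_setOf_eq, Finset.sum_eq_zero_iff, Set.mem_iInter, Set.mem_preimage,
        Set.mem_singleton_iff, Finset.filter_ne']
    rw [hset, hindep.meas_biInter (fun i _ => ⟨{(0:ℕ)}, measurableSet_singleton _, rfl⟩),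
      ENNReal.ofReal_prod_of_nonneg (fun i _ => (hppos i 0).le)]
    exact Finset.prod_congr rfl fun i _ => hpY i 0
  set D : ℝ := ∏ i ∈ Finset.univ.erase i0, p i 0 with hDdef
  have hDpos : 0 < D := Finset.prod_pos fun i _ => hppos i 0
  set B : ℝ := p i0 m * D with hBdef
  have hBpos : 0 < B := mul_pos (hppos i0 m) hDpos
  -- assemble RHS
  rw [hnum, hpY i0 m, hS0, ← ENNReal.ofReal_mul (hppos i0 m).le,
    ← ENNReal.ofReal_div_of_pos hBpos]
  congr 1
  rw [eq_div_iff (ne_of_gt hBpos)]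
  -- the key real identity
  rw [Finset.mul_sum, Finset.sum_mul]
  have hmemT : ∀ l : Fin f → ℕ, l ∈ T ↔ (∀ i, l i ≤ m) ∧ ∑ i, l i ≤ m := by
    intro l
    simp only [hTdef, Finset.mem_filter, Fintype.mem_piFinset, Finset.mem_range,
      Nat.lt_succ_iff]
  have hsum_erase : ∀ l : Fin f → ℕ, ∑ i ∈ Finset.univ.erase i0, l i = (∑ i, l i) - l i0 := by
    intro l
    have := Finset.add_sum_erase Finset.univ l (Finset.mem_univ i0)
    omega
  have hsingle : ∀ l : Fin f → ℕ, l i0 ≤ ∑ j, l j := fun l =>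
    Finset.single_le_sum (f := l) (fun j _ => Nat.zero_le _) (Finset.mem_univ i0)
  have hsumφ : ∀ l : Fin f → ℕ, (∑ j, l j) ≤ m →
      (∑ i, (if i = i0 then m - ∑ j, l j else l i)) = m - l i0 := by
    intro l hl
    have h0 := hsingle l
    rw [← Finset.add_sum_erase _ _ (Finset.mem_univ i0), if_pos rfl,
      Finset.sum_congr rfl (fun i hi => if_neg (Finset.ne_of_mem_erase hi)), hsum_erase]
    omega
  have hmapT : ∀ l ∈ T, (fun i => if i = i0 then m - ∑ j, l j else l i) ∈ T := by
    intro l hl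
    rw [hmemT] at hl ⊢
    have h0 := hsingle l
    constructor
    · intro i
      by_cases h : i = i0
      · rw [if_pos h]; omega
      · rw [if_neg h]; exact hl.1 i
    · rw [hsumφ l hl.2]; omega
  have hinv : ∀ l ∈ T, (fun i => if i = i0 then
      m - ∑ j, (if j = i0 then m - ∑ k, l k else l j) else
      (if i = i0 then m - ∑ j, l j else l i)) = l := by
    intro l hl
    rw [hmemT] at hl
    have h0 := hsingle l
    funext i
    by_cases h : i = i0
    · rw [h, hsumφ l hl.2]
      have hgoal : m - (m - l i0) = l i0 := by omega
      simpa using hgoal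
    · simp only [if_neg h]
  refine Finset.sum_nbij' (fun l i => if i = i0 then m - ∑ j, l j else l i)
    (fun l i => if i = i0 then m - ∑ j, l j else l i) hmapT hmapT hinv hinv ?_
  intro l hl
  rw [hmemT] at hl
  obtain ⟨hlm, hls⟩ := hl
  have h0 := hsingle l
  have hDval : D = ∏ i ∈ Finset.univ.erase i0, (1 - κ0 / κ i) := by
    rw [hDdef]
    refine Finset.prod_congr rfl fun i hi => ?_
    simp [hpdef, Finset.ne_of_mem_erase hi]
  set E : ℝ := ∏ i ∈ Finset.univ.erase i0, ((κ i)⁻¹) ^ l i with hEdef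
  have hsplitκ : (∏ i, ((κ i)⁻¹) ^ l i) = (κ0⁻¹) ^ (l i0) * E :=
    (Finset.mul_prod_erase _ _ (Finset.mem_univ i0)).symm
  have hsplitp : (∏ i, p i (if i = i0 then m - ∑ j, l j else l i))
      = p i0 (m - ∑ j, l j) * ∏ i ∈ Finset.univ.erase i0, p i (l i) := by
    rw [← Finset.mul_prod_erase Finset.univ _ (Finset.mem_univ i0), if_pos rfl]
    exact congrArg _ (Finset.prod_congr rfl fun i hi => by
      rw [if_neg (Finset.ne_of_mem_erase hi)])
  have hgeo : (∏ i ∈ Finset.univ.erase i0, p i (l i))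
      = D * (κ0 ^ (∑ i ∈ Finset.univ.erase i0, l i) * E) := by
    rw [hDval, ← Finset.prod_pow_eq_pow_sum, hEdef, ← Finset.prod_mul_distrib,
      ← Finset.prod_mul_distrib]
    refine Finset.prod_congr rfl fun i hi => ?_
    have hne := Finset.ne_of_mem_erase hi
    simp only [hpdef, if_neg hne]
    ring
  have hκpow : (κ0⁻¹) ^ (l i0) * κ0 ^ m
      = κ0 ^ (m - ∑ j, l j) * κ0 ^ (∑ i ∈ Finset.univ.erase i0, l i) := by
    rw [hsum_erase, ← pow_add]
    have hh : m - ∑ j, l j + ((∑ j, l j) - l i0) = m - l i0 := by omega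
    rw [hh, pow_sub₀ κ0 (ne_of_gt hκ0) (le_trans h0 hls), ← inv_pow, mul_comm]
  have hp0m : p i0 m = Real.exp (-κ0) * κ0 ^ m / (Nat.factorial m) := by
    simp [hpdef]
  have hp0ms : p i0 (m - ∑ j, l j)
      = Real.exp (-κ0) * κ0 ^ (m - ∑ j, l j) / (Nat.factorial (m - ∑ j, l j)) := by
    simp [hpdef]
  rw [hsplitp, hgeo, hsplitκ, hBdef, hp0m, hp0ms]
  have hf1 : ((Nat.factorial m : ℝ)) ≠ 0 := Nat.cast_ne_zero.2 (Nat.factorial_ne_zero m)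
  have hf2 : ((Nat.factorial (m - ∑ i, l i) : ℝ)) ≠ 0 :=
    Nat.cast_ne_zero.2 (Nat.factorial_ne_zero _)
  have hstep : (Nat.factorial m : ℝ) * ((κ0⁻¹ ^ l i0 * E) / (Nat.factorial (m - ∑ i, l i))) *
      (Real.exp (-κ0) * κ0 ^ m / (Nat.factorial m) * D)
      = (κ0⁻¹ ^ l i0 * κ0 ^ m) *
        (Real.exp (-κ0) * E * D / (Nat.factorial (m - ∑ i, l i))) := by
    field_simp
  rw [hstep, hκpow]
  field_simp
end

section
/- Two-type fixed-point quadratic: for f̄₁ > 0, f̄₂ > 0, and 0 < ρ < 1, the quadratic ψ² - ψ(1 + f̄₁/(1-ρ) + ρ f̄₂/(1-ρ)) + ρ f̄₂/(1-ρ) = 0 has exactly one root in the open interval (0, min(f̄₂·ρ/(1-ρ), 1)). -/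
open Set

/-- Two-type fixed-point quadratic: for `f̄₁ > 0`, `f̄₂ > 0` and `0 < ρ < 1`,
the quadratic `ψ² - ψ(1 + f̄₁/(1-ρ) + ρ f̄₂/(1-ρ)) + ρ f̄₂/(1-ρ) = 0` has
exactly one root in `(0, min(f̄₂ ρ/(1-ρ), 1))`. -/
theorem stmt_19 (fbar₁ fbar₂ ρ : ℝ) (hf₁ : 0 < fbar₁) (hf₂ : 0 < fbar₂)
    (hρ : ρ ∈ Ioo (0 : ℝ) 1) :
    ∃! ψ : ℝ, ψ ∈ Ioo 0 (min (fbar₂ * ρ / (1 - ρ)) 1) ∧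
      ψ ^ 2 - ψ * (1 + fbar₁ / (1 - ρ) + ρ * fbar₂ / (1 - ρ)) +
        ρ * fbar₂ / (1 - ρ) = 0 := by
  obtain ⟨hρ0, hρ1⟩ := hρ
  have h1ρ : (0:ℝ) < 1 - ρ := by linarith
  set F : ℝ := fbar₁ / (1 - ρ) with hF
  set K : ℝ := ρ * fbar₂ / (1 - ρ) with hK
  have hFpos : 0 < F := div_pos hf₁ h1ρ
  have hKpos : 0 < K := div_pos (mul_pos hρ0 hf₂) h1ρ
  have hKeq : fbar₂ * ρ / (1 - ρ) = K := by rw [hK, mul_comm]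
  set m : ℝ := min (fbar₂ * ρ / (1 - ρ)) 1 with hm
  have hmpos : 0 < m := lt_min (hKeq ▸ hKpos) one_pos
  have hmK : m ≤ K := hKeq ▸ min_le_left _ _
  have hm1 : m ≤ 1 := min_le_right _ _
  set s : ℝ := 1 + F + K with hs
  have hpm : m ^ 2 - m * s + K < 0 := by
    rcases min_cases (fbar₂ * ρ / (1 - ρ)) 1 with ⟨h, _⟩ | ⟨h, _⟩
    · have : m = K := by rw [hm, h, hKeq]
      rw [this]; nlinarith
    · have : m = 1 := by rw [hm, h]
      rw [this]; nlinarith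
  -- existence via IVT
  have hcont : ContinuousOn (fun x : ℝ => x ^ 2 - x * s + K) (Icc 0 m) := by
    fun_prop
  have hsub := intermediate_value_Ioo' (le_of_lt hmpos) hcont
  have h0 : (0:ℝ) ∈ Ioo ((fun x : ℝ => x ^ 2 - x * s + K) m)
      ((fun x : ℝ => x ^ 2 - x * s + K) 0) := by
    constructor
    · simpa using hpm
    · simpa using hKpos
  obtain ⟨ψ, hψmem, hψroot⟩ := hsub h0
  refine ⟨ψ, ⟨hψmem, by simpa using hψroot⟩, ?_⟩
  rintro y ⟨⟨hy0, hym⟩, hyroot⟩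
  obtain ⟨hψ0, hψm⟩ := hψmem
  have hψr : ψ ^ 2 - ψ * s + K = 0 := by simpa using hψroot
  have hyr : y ^ 2 - y * s + K = 0 := hyroot
  by_contra hne
  have hsum : y + ψ = s := by
    have hd : (y - ψ) * (y + ψ - s) = 0 := by linear_combination hyr - hψr
    rcases mul_eq_zero.mp hd with h | h
    · exact absurd (by linarith) hne
    · linarith
  have hprod : y * ψ = K := by nlinarith [hyr, hsum]
  have hyK : y < K := lt_of_lt_of_le hym hmK
  have hψ1 : ψ < 1 := lt_of_lt_of_le hψm hm1
  nlinarith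
end
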